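/- If D is an n-periodic properly bounded difference operator of order d supported in [m₋,m₊], then the determinant of its monodromy M (the restriction of the shift Tⁿ to Ker D) equals (-1)^{nd} · ∏_{k=1}^n (a_k^{m₋} / a_k^{m₊}). -/

import Mathlib

open Matrix Finset

namespace DetMonAux

variable (a : ℤ → ℤ → ℝ) (m : ℤ) (d' : ℕ)

/-- The companion (transfer) matrix of the difference equation at site `k`. -/
noncomputable def cmat (k : ℤ) : Matrix (Fin (d' + 1)) (Fin (d' + 1)) ℝ :=
  Matrix.of fun i j => if (i : ℕ) + 1 < d' + 1 then (if (j : ℕ) = (i : ℕ) + 1 then 1 else 0)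
    else -(a k (m + (j : ℕ))) / a k (m + ((d' : ℤ) + 1))

noncomputable def pfwd : ℕ → Matrix (Fin (d' + 1)) (Fin (d' + 1)) ℝ
  | 0 => 1
  | k + 1 => cmat a m d' k * pfwd k

noncomputable def pbwd : ℕ → Matrix (Fin (d' + 1)) (Fin (d' + 1)) ℝ
  | 0 => 1
  | k + 1 => (cmat a m d' (-(k + 1 : ℕ)))⁻¹ * pbwd k

/-- The cocycle of transfer matrices over `ℤ`. -/
noncomputable def pmat : ℤ → Matrix (Fin (d' + 1)) (Fin (d' + 1)) ℝ
  | Int.ofNat k => pfwd a m d' k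
  | Int.negSucc k => pbwd a m d' (k + 1)

/-- The solution of the difference equation with initial window `w`. -/
noncomputable def sol (w : Fin (d' + 1) → ℝ) : ℤ → ℝ := fun j =>
  (pmat a m d' (j - m)).mulVec w 0

lemma det_cmat (k : ℤ) :
    (cmat a m d' k).det = (-1) ^ (d' + 1) * (a k m / a k (m + ((d' : ℤ) + 1))) := by
  rw [cmat, Matrix.det_succ_column_zero, Finset.sum_eq_single (Fin.last d')]
  · have h1 : ((Matrix.of fun i j : Fin (d' + 1) =>
        if (i : ℕ) + 1 < d' + 1 then (if (j : ℕ) = (i : ℕ) + 1 then (1:ℝ) else 0)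
        else -(a k (m + (j : ℕ))) / a k (m + ((d' : ℤ) + 1))).submatrix
          (Fin.last d').succAbove Fin.succ) = 1 := by
      ext i j
      simp only [Matrix.submatrix_apply, Fin.succAbove_last, Matrix.of_apply,
        Fin.coe_castSucc, Fin.val_succ, Matrix.one_apply]
      have hi : (i : ℕ) + 1 < d' + 1 := by omega
      rw [if_pos hi]
      by_cases h : i = j
      · subst h; simp
      · rw [if_neg h, if_neg]
        intro hc
        exact h (Fin.ext (by omega)).symm
    rw [h1, Matrix.det_one, mul_one, Matrix.of_apply]
    rw [if_neg (by simp)]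
    simp only [Fin.val_last, Fin.val_zero, Nat.cast_zero, add_zero]
    rw [pow_succ]
    ring
  · intro b _ hb
    have hb' : (b : ℕ) + 1 < d' + 1 := by
      have := Fin.lt_last_iff_ne_last.2 hb
      omega
    rw [Matrix.of_apply, if_pos hb', if_neg (by simp)]
    ring
  · simp

variable {a m}

lemma isUnit_det_cmat (hlow : ∀ k, a k m ≠ 0) (hhigh : ∀ k, a k (m + ((d' : ℤ) + 1)) ≠ 0)
    (k : ℤ) : IsUnit (cmat a m d' k).det := by
  rw [det_cmat, isUnit_iff_ne_zero]
  exact mul_ne_zero (pow_ne_zero _ (by norm_num)) (div_ne_zero (hlow k) (hhigh k))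

lemma pmat_succ (hlow : ∀ k, a k m ≠ 0) (hhigh : ∀ k, a k (m + ((d' : ℤ) + 1)) ≠ 0)
    (k : ℤ) : pmat a m d' (k + 1) = cmat a m d' k * pmat a m d' k := by
  have hmul : ∀ j : ℤ, ∀ B, cmat a m d' j * ((cmat a m d' j)⁻¹ * B) = B := by
    intro j B
    rw [← mul_assoc, Matrix.mul_nonsing_inv _ (isUnit_det_cmat d' hlow hhigh j), one_mul]
  cases k with
  | ofNat k =>
      have h1 : (Int.ofNat k) + 1 = Int.ofNat (k + 1) := rfl
      rw [h1]
      rfl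
  | negSucc k =>
      cases k with
      | zero =>
          have h1 : (Int.negSucc 0) + 1 = Int.ofNat 0 := rfl
          have h2 : Int.negSucc 0 = -((0 : ℕ) + 1 : ℕ) := rfl
          rw [h1]
          show (1 : Matrix (Fin (d' + 1)) (Fin (d' + 1)) ℝ) = _
          rw [h2]
          show (1 : Matrix (Fin (d' + 1)) (Fin (d' + 1)) ℝ) =
            cmat a m d' (-((0 : ℕ) + 1 : ℕ)) * ((cmat a m d' (-((0 : ℕ) + 1 : ℕ)))⁻¹ * 1)
          rw [hmul]
      | succ k =>
          have h1 : (Int.negSucc (k + 1)) + 1 = Int.negSucc k := by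
            rw [Int.negSucc_eq, Int.negSucc_eq]; push_cast; ring
          have h2 : (-(((k + 1) + 1 : ℕ) : ℤ)) = Int.negSucc (k + 1) := by
            rw [Int.negSucc_eq]; push_cast; ring
          rw [h1]
          have e1 : pmat a m d' (Int.negSucc k) = pbwd a m d' (k + 1) := rfl
          have e2 : pmat a m d' (Int.negSucc (k + 1)) = pbwd a m d' (k + 2) := rfl
          have e3 : pbwd a m d' (k + 2)
              = (cmat a m d' (-(((k + 1) + 1 : ℕ) : ℤ)))⁻¹ * pbwd a m d' (k + 1) := rfl
          rw [e1, e2, e3, h2, hmul]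
/-- rows `< d'` of `cmat` shift the window. -/
lemma cmat_mulVec_lt (k : ℤ) (u : Fin (d' + 1) → ℝ) (i : ℕ) (hi : i + 1 < d' + 1) :
    (cmat a m d' k).mulVec u ⟨i, by omega⟩ = u ⟨i + 1, hi⟩ := by
  rw [Matrix.mulVec, dotProduct, Finset.sum_eq_single (⟨i + 1, hi⟩ : Fin (d' + 1))]
  · rw [cmat, Matrix.of_apply, if_pos hi, if_pos rfl, one_mul]
  · intro b _ hb
    rw [cmat, Matrix.of_apply, if_pos hi, if_neg, zero_mul]
    intro hc
    exact hb (Fin.ext hc)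
  · simp

lemma cmat_mulVec_last (k : ℤ) (u : Fin (d' + 1) → ℝ) :
    (cmat a m d' k).mulVec u (Fin.last d') =
      ∑ j : Fin (d' + 1), -(a k (m + (j : ℕ))) / a k (m + ((d' : ℤ) + 1)) * u j := by
  rw [Matrix.mulVec, dotProduct]
  refine Finset.sum_congr rfl fun j _ => ?_
  rw [cmat, Matrix.of_apply, if_neg (by simp)]

lemma sol_window (hlow : ∀ k, a k m ≠ 0) (hhigh : ∀ k, a k (m + ((d' : ℤ) + 1)) ≠ 0)
    (w : Fin (d' + 1) → ℝ) :
    ∀ (i : ℕ) (hi : i < d' + 1) (k : ℤ),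
      sol a m d' w (k + m + (i : ℕ)) = (pmat a m d' k).mulVec w ⟨i, hi⟩ := by
  intro i
  induction i with
  | zero =>
      intro hi k
      have h1 : k + m + ((0 : ℕ) : ℤ) - m = k := by push_cast; ring
      rw [sol, h1]
      rfl
  | succ i ih =>
      intro hi k
      have h1 : k + m + ((i + 1 : ℕ) : ℤ) = (k + 1) + m + (i : ℕ) := by push_cast; ring
      rw [h1, ih (by omega) (k + 1), pmat_succ d' hlow hhigh k, ← Matrix.mulVec_mulVec,
        cmat_mulVec_lt d' k _ i hi]

lemma sol_rec (hlow : ∀ k, a k m ≠ 0) (hhigh : ∀ k, a k (m + ((d' : ℤ) + 1)) ≠ 0)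
    (w : Fin (d' + 1) → ℝ) (k : ℤ) :
    ∑ i ∈ Finset.range (d' + 1 + 1), a k (m + (i : ℕ)) * sol a m d' w (k + m + (i : ℕ)) = 0 := by
  rw [Finset.sum_range_succ]
  have hlastidx : k + m + ((d' + 1 : ℕ) : ℤ) = (k + 1) + m + ((d' : ℕ) : ℤ) := by push_cast; ring
  have hlast : sol a m d' w (k + m + ((d' + 1 : ℕ) : ℤ)) =
      ∑ j : Fin (d' + 1), -(a k (m + (j : ℕ))) / a k (m + ((d' : ℤ) + 1)) *
        (pmat a m d' k).mulVec w j := by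
    rw [hlastidx, sol_window d' hlow hhigh w d' (by omega) (k + 1),
      pmat_succ d' hlow hhigh k, ← Matrix.mulVec_mulVec]
    have : (⟨d', by omega⟩ : Fin (d' + 1)) = Fin.last d' := rfl
    rw [this, cmat_mulVec_last]
  have hfirst : ∑ i ∈ Finset.range (d' + 1), a k (m + (i : ℕ)) * sol a m d' w (k + m + (i : ℕ)) =
      ∑ j : Fin (d' + 1), a k (m + (j : ℕ)) * (pmat a m d' k).mulVec w j := by
    rw [← Fin.sum_univ_eq_sum_range]
    exact Finset.sum_congr rfl fun j _ => by
      rw [sol_window d' hlow hhigh w j j.isLt k]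
  rw [hlast, hfirst, Finset.mul_sum, ← Finset.sum_add_distrib]
  refine Finset.sum_eq_zero fun j _ => ?_
  have hA : a k (m + ((d' : ℤ) + 1)) ≠ 0 := hhigh k
  field_simp
  push_cast
  ring

lemma eq_zero_of_window (hlow : ∀ k, a k m ≠ 0) (hhigh : ∀ k, a k (m + ((d' : ℤ) + 1)) ≠ 0)
    (ξ : ℤ → ℝ)
    (hξ : ∀ k : ℤ, ∑ i ∈ Finset.range (d' + 1 + 1), a k (m + (i : ℕ)) * ξ (k + m + (i : ℕ)) = 0)
    (h0 : ∀ i : ℕ, i < d' + 1 → ξ (m + (i : ℕ)) = 0) : ξ = 0 := by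
  have key : ∀ k : ℤ, ∀ i : ℕ, i < d' + 1 → ξ (k + m + (i : ℕ)) = 0 := by
    intro k
    induction k using Int.induction_on with
    | zero => intro i hi; simpa using h0 i hi
    | succ k ih =>
        intro i hi
        by_cases hc : i < d'
        · have h1 : ((k : ℤ) + 1) + m + (i : ℕ) = (k : ℤ) + m + ((i + 1 : ℕ) : ℤ) := by
            push_cast; ring
          rw [h1]; exact ih (i + 1) (by omega)
        · have hi' : i = d' := by omega
          rw [hi']
          have hsum := hξ k
          rw [Finset.sum_range_succ] at hsum
          have hz : ∑ i ∈ Finset.range (d' + 1),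
              a (k : ℤ) (m + (i : ℕ)) * ξ ((k : ℤ) + m + (i : ℕ)) = 0 :=
            Finset.sum_eq_zero fun i hi2 => by
              rw [ih i (Finset.mem_range.1 hi2), mul_zero]
          rw [hz, zero_add] at hsum
          have h1 : ((k : ℤ) + 1) + m + ((d' : ℕ) : ℤ) = (k : ℤ) + m + ((d' + 1 : ℕ) : ℤ) := by
            push_cast; ring
          rw [h1]
          rcases mul_eq_zero.1 hsum with h | h
          · exact absurd h (by push_cast; exact hhigh k)
          · exact h
    | pred k ih =>
        intro i hi
        by_cases hc : 1 ≤ i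
        · have h1 : (-(k : ℤ) - 1) + m + (i : ℕ) = (-(k : ℤ)) + m + ((i - 1 : ℕ) : ℤ) := by
            have : ((i - 1 : ℕ) : ℤ) = (i : ℤ) - 1 := by omega
            rw [this]; ring
          rw [h1]; exact ih (i - 1) (by omega)
        · have hi' : i = 0 := by omega
          subst hi'
          have hsum := hξ (-(k : ℤ) - 1)
          rw [Finset.sum_range_succ'] at hsum
          have hz : ∑ i ∈ Finset.range (d' + 1), a (-(k : ℤ) - 1) (m + ((i + 1 : ℕ) : ℤ)) *
              ξ ((-(k : ℤ) - 1) + m + ((i + 1 : ℕ) : ℤ)) = 0 :=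
            Finset.sum_eq_zero fun i hi2 => by
              have h1 : (-(k : ℤ) - 1) + m + ((i + 1 : ℕ) : ℤ) = (-(k : ℤ)) + m + ((i : ℕ) : ℤ) := by
                push_cast; ring
              rw [h1, ih i (Finset.mem_range.1 hi2), mul_zero]
          rw [hz, zero_add] at hsum
          rcases mul_eq_zero.1 hsum with h | h
          · exact absurd h (by simpa using hlow (-(k : ℤ) - 1))
          · simpa using h
  funext j
  have := key (j - m) 0 (by omega)
  simpa using this
lemma det_pfwd (N : ℕ) :
    (pfwd a m d' N).det = ∏ k ∈ Finset.range N, (cmat a m d' (k : ℤ)).det := by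
  induction N with
  | zero => simp [pfwd]
  | succ N ih => rw [pfwd, Matrix.det_mul, ih, Finset.prod_range_succ, mul_comm]

end DetMonAux

open DetMonAux

theorem det_monodromy (n d : ℕ) (hn : 1 ≤ n) (m : ℤ) (a : ℤ → ℤ → ℝ)
    (hper : ∀ k j : ℤ, a (k + n) j = a k j)
    (hlow : ∀ k, a k m ≠ 0) (hhigh : ∀ k, a k (m + d) ≠ 0)
    (D : (ℤ → ℝ) →ₗ[ℝ] (ℤ → ℝ))
    (hD : ∀ ξ : ℤ → ℝ, ∀ k : ℤ,
      D ξ k = ∑ i ∈ Finset.range (d + 1), a k (m + i) * ξ (k + m + i))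
    (M : LinearMap.ker D →ₗ[ℝ] LinearMap.ker D)
    (hM : ∀ ξ : LinearMap.ker D, ∀ k : ℤ, (M ξ : ℤ → ℝ) k = (ξ : ℤ → ℝ) (k + n)) :
    LinearMap.det M = (-1) ^ (n * d) * ∏ k ∈ Finset.Icc (1 : ℤ) (n : ℤ), (a k m / a k (m + d)) := by
  cases d with
  | zero =>
      -- kernel is trivial
      have hker : ∀ ξ : LinearMap.ker D, ξ = 0 := by
        rintro ⟨ξ, hξ⟩
        have hξ' : D ξ = 0 := hξ
        apply Subtype.ext
        show ξ = 0
        funext j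
        have h := congrFun hξ' (j - m)
        rw [hD] at h
        simp only [zero_add, Finset.range_one, Finset.sum_singleton, Nat.cast_zero,
          add_zero, Pi.zero_apply] at h
        have h2 : j - m + m = j := by ring
        rw [h2] at h
        rcases mul_eq_zero.1 h with h | h
        · exact absurd h (hlow _)
        · simpa using h
      have : M = LinearMap.id := by
        ext ξ
        rw [hker (M ξ), hker ξ]
        simp
      rw [this, LinearMap.det_id]
      symm
      rw [Nat.mul_zero, pow_zero, one_mul]
      refine Finset.prod_eq_one fun k _ => ?_
      have : m + ((0 : ℕ) : ℤ) = m := by simp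
      rw [this, div_self (hlow k)]
  | succ d' =>
      have hhigh' : ∀ k, a k (m + ((d' : ℤ) + 1)) ≠ 0 := by
        intro k
        have h := hhigh k
        push_cast at h
        exact h
      -- membership of sol in the kernel
      have hsolmem : ∀ w, sol a m d' w ∈ LinearMap.ker D := by
        intro w
        rw [LinearMap.mem_ker]
        funext k
        rw [hD]
        exact sol_rec d' hlow hhigh' w k
      -- linear maps
      let e : LinearMap.ker D →ₗ[ℝ] (Fin (d' + 1) → ℝ) :=
        { toFun := fun ξ i => (ξ : ℤ → ℝ) (m + ((i : ℕ) : ℤ))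
          map_add' := fun ξ η => by funext i; simp
          map_smul' := fun c ξ => by funext i; simp }
      let solL : (Fin (d' + 1) → ℝ) →ₗ[ℝ] LinearMap.ker D :=
        { toFun := fun w => ⟨sol a m d' w, hsolmem w⟩
          map_add' := fun w v => by
            apply Subtype.ext
            funext j
            simp [sol, Matrix.mulVec_add]
          map_smul' := fun c w => by
            apply Subtype.ext
            funext j
            simp [sol, Matrix.mulVec_smul] }
      have hcomp2 : ∀ w i, e (solL w) i = (pmat a m d' 0).mulVec w i := by
        intro w i
        show sol a m d' w (m + ((i : ℕ) : ℤ)) = _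
        have h1 : m + ((i : ℕ) : ℤ) = 0 + m + ((i : ℕ) : ℤ) := by ring
        rw [h1, sol_window d' hlow hhigh' w i i.isLt 0]
      have hp0 : pmat a m d' 0 = 1 := rfl
      have he_sol : ∀ w, e (solL w) = w := by
        intro w
        funext i
        rw [hcomp2, hp0, Matrix.one_mulVec]
      have hsol_e : ∀ ξ : LinearMap.ker D, solL (e ξ) = ξ := by
        intro ξ
        apply Subtype.ext
        have hdiff : sol a m d' (e ξ) - (ξ : ℤ → ℝ) = 0 := by
          apply eq_zero_of_window d' hlow hhigh'
          · intro k
            have h1 := sol_rec d' hlow hhigh' (e ξ) k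
            have h2 : ∑ i ∈ Finset.range (d' + 1 + 1), a k (m + (i : ℕ)) *
                (ξ : ℤ → ℝ) (k + m + (i : ℕ)) = 0 := by
              have := ξ.2
              rw [LinearMap.mem_ker] at this
              have h3 := congrFun this k
              rw [hD] at h3
              simpa using h3
            simp only [Pi.sub_apply, mul_sub, Finset.sum_sub_distrib, h1, h2, sub_zero]
          · intro i hi
            have h4 := he_sol (e ξ)
            have h5 : sol a m d' (e ξ) (m + ((i : ℕ) : ℤ)) = e ξ ⟨i, hi⟩ := by
              have h1 : m + ((i : ℕ) : ℤ) = 0 + m + ((i : ℕ) : ℤ) := by ring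
              rw [h1, sol_window d' hlow hhigh' (e ξ) i hi 0, hp0, Matrix.one_mulVec]
            simp only [Pi.sub_apply, h5]
            show (ξ : ℤ → ℝ) (m + ((i : ℕ) : ℤ)) - _ = 0
            simp
        have := sub_eq_zero.1 hdiff
        exact this
      let E : (Fin (d' + 1) → ℝ) ≃ₗ[ℝ] LinearMap.ker D :=
        LinearEquiv.ofLinear solL e
          (LinearMap.ext fun ξ => by
            simp only [LinearMap.comp_apply, LinearMap.id_apply]; exact hsol_e ξ)
          (LinearMap.ext fun w => by
            simp only [LinearMap.comp_apply, LinearMap.id_apply]; exact he_sol w)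
      -- identify M with the transfer matrix power
      have hkey : M = (E : (Fin (d' + 1) → ℝ) →ₗ[ℝ] LinearMap.ker D) ∘ₗ
          Matrix.toLin' (pmat a m d' (n : ℤ)) ∘ₗ
          (E.symm : LinearMap.ker D →ₗ[ℝ] (Fin (d' + 1) → ℝ)) := by
        apply LinearMap.ext
        intro ξ
        have hsymm : (E.symm : LinearMap.ker D →ₗ[ℝ] (Fin (d' + 1) → ℝ)) ξ = e ξ := rfl
        have hEapp : ∀ w, (E : (Fin (d' + 1) → ℝ) →ₗ[ℝ] LinearMap.ker D) w = solL w := fun _ => rfl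
        simp only [LinearMap.comp_apply, hsymm, hEapp]
        -- goal : M ξ = solL (toLin' (pmat n) (e ξ))
        have einj : Function.Injective e := by
          intro x y h
          have := congrArg solL h
          rwa [hsol_e, hsol_e] at this
        apply einj
        rw [he_sol]
        funext i
        show (M ξ : ℤ → ℝ) (m + ((i : ℕ) : ℤ)) = _
        rw [hM ξ (m + ((i : ℕ) : ℤ))]
        have h0 : (ξ : ℤ → ℝ) = sol a m d' (e ξ) :=
          (congrArg Subtype.val (hsol_e ξ)).symm
        rw [h0]
        have h1 : m + ((i : ℕ) : ℤ) + (n : ℤ) = (n : ℤ) + m + ((i : ℕ) : ℤ) := by ring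
        rw [h1, sol_window d' hlow hhigh' (e ξ) i i.isLt (n : ℤ)]
        show _ = Matrix.toLin' (pmat a m d' (n : ℤ)) (e ξ) i
        rw [Matrix.toLin'_apply]
      rw [hkey, LinearMap.det_conj, LinearMap.det_toLin']
      -- compute the determinant of the transfer matrix power
      have hpn : pmat a m d' (n : ℤ) = pfwd a m d' n := rfl
      rw [hpn, det_pfwd]
      have hterm : ∀ k : ℕ, (cmat a m d' (k : ℤ)).det =
          (-1) ^ (d' + 1) * (a (k : ℤ) m / a (k : ℤ) (m + ((d' : ℤ) + 1))) := fun k => det_cmat a m d' _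
      rw [Finset.prod_congr rfl fun k _ => hterm k, Finset.prod_mul_distrib,
        Finset.prod_const, ← pow_mul]
      have hcast : ∀ k : ℤ, m + ((d' : ℤ) + 1) = m + ((d' + 1 : ℕ) : ℤ) := by
        intro k; push_cast; ring
      congr 1
      · rw [mul_comm, Finset.card_range]
      -- product reindexing
      have g : ℤ → ℝ := fun k => a k m / a k (m + ((d' + 1 : ℕ) : ℤ))
      have hIcc : Finset.Icc (1 : ℤ) (n : ℤ) =
          Finset.image (fun i : ℕ => (i : ℤ) + 1) (Finset.range n) := by
        ext j
        simp only [Finset.mem_Icc, Finset.mem_image, Finset.mem_range]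
        constructor
        · rintro ⟨h1, h2⟩
          refine ⟨(j - 1).toNat, ?_, ?_⟩
          · omega
          · omega
        · rintro ⟨i, hi, rfl⟩
          omega
      rw [hIcc, Finset.prod_image (fun x _ y _ h => by omega)]
      -- now: ∏ i in range n, g (i+1) = ∏ i in range n, g i
      have hshift : ∀ (f : ℤ → ℝ), f (n : ℤ) = f 0 → f 0 ≠ 0 →
          ∏ i ∈ Finset.range n, f ((i : ℤ) + 1) = ∏ i ∈ Finset.range n, f (i : ℤ) := by
        intro f hfn hf0
        have h1 : ∏ i ∈ Finset.range (n + 1), f (i : ℤ) =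
            (∏ i ∈ Finset.range n, f ((i : ℤ) + 1)) * f 0 := by
          rw [Finset.prod_range_succ']
          simp only [Nat.cast_add, Nat.cast_one, Nat.cast_zero]
        have h2 : ∏ i ∈ Finset.range (n + 1), f (i : ℤ) =
            (∏ i ∈ Finset.range n, f (i : ℤ)) * f (n : ℤ) := Finset.prod_range_succ _ _
        rw [h1, hfn] at h2
        exact mul_right_cancel₀ hf0 h2
      have hper0 : a (n : ℤ) m / a (n : ℤ) (m + ((d' : ℤ) + 1)) =
          a 0 m / a 0 (m + ((d' : ℤ) + 1)) := by
        have h1 : (n : ℤ) = 0 + (n : ℤ) := by ring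
        rw [h1, hper, hper]
      rw [hshift (fun k => a k m / a k (m + ((d' + 1 : ℕ) : ℤ)))
        (by push_cast; exact hper0) (by push_cast; exact div_ne_zero (hlow 0) (hhigh' 0))]
      refine Finset.prod_congr rfl fun k _ => ?_
      push_cast
      ring_nf
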